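/- For every integer k ≥ 0, the continued fraction [[∑_{1≤j≤k} 1/j³, (2n−1)(n²−n+2k²+2k+1)], [1, −n⁶]] converges to ζ(3): with a(0) = ∑_{1≤j≤k} 1/j³, a(n) = (2n−1)(n²−n+2k²+2k+1) for n ≥ 1, b(0) = 1, b(n) = −n⁶ for n ≥ 1, the convergents p(N)/q(N) tend to ζ(3) as N → ∞. -/

import Mathlib

open Finset
noncomputable def zcfD (x : ℝ) (j : ℕ) : ℝ := ∏ i ∈ Finset.range j, (x - i)
lemma zcfD_succ (x : ℝ) (j : ℕ) : zcfD x (j+1) = zcfD x j * (x - j) :=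
  Finset.prod_range_succ _ _
lemma zcfD_succ' (x : ℝ) (j : ℕ) : zcfD (x+1) (j+1) = (x+1) * zcfD x j := by
  unfold zcfD
  rw [Finset.prod_range_succ']
  simp only [Nat.cast_zero, sub_zero]
  rw [mul_comm]
  congr 1
  exact Finset.prod_congr rfl (fun i _ => by push_cast; ring)
lemma zcfD_zero_of_lt (n j : ℕ) (h : n < j) : zcfD (n : ℝ) j = 0 :=
  Finset.prod_eq_zero (Finset.mem_range.mpr h) (by simp)
lemma zcfD_cast (n j : ℕ) : ((n.descFactorial j : ℕ) : ℝ) = zcfD (n : ℝ) j := by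
  induction j with
  | zero => simp [zcfD]
  | succ j ih =>
    rw [Nat.descFactorial_succ, zcfD_succ]
    rcases le_or_gt j n with h | h
    · push_cast [h]
      rw [ih]; ring
    · rw [Nat.sub_eq_zero_of_le h.le]
      rw [zcfD_zero_of_lt n j h]
      simp
noncomputable def zcfB (n j : ℕ) : ℝ := (n.choose j : ℝ) * (((n+j).choose j : ℕ) : ℝ)
lemma zcfB_fac (n j : ℕ) :
    zcfB n j * ((j.factorial : ℝ))^2 = zcfD (n : ℝ) j * zcfD ((n : ℝ) + j) j := by
  have h1 : (n.choose j : ℝ) * (j.factorial : ℝ) = zcfD (n : ℝ) j := by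
    rw [← zcfD_cast]
    push_cast [Nat.descFactorial_eq_factorial_mul_choose]
    ring
  have h2 : (((n+j).choose j : ℕ) : ℝ) * (j.factorial : ℝ) = zcfD ((n : ℝ) + j) j := by
    rw [show ((n : ℝ) + j) = (((n + j : ℕ) : ℝ)) by push_cast; ring, ← zcfD_cast]
    push_cast [Nat.descFactorial_eq_factorial_mul_choose]
    ring
  rw [← h1, ← h2]
  unfold zcfB
  ring
lemma zcfB_nonneg (n j : ℕ) : 0 ≤ zcfB n j :=
  mul_nonneg (Nat.cast_nonneg _) (Nat.cast_nonneg _)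
lemma zcfB_zero (n : ℕ) : zcfB n 0 = 1 := by simp [zcfB]
lemma zcfB_zero_of_lt (n j : ℕ) (h : n < j) : zcfB n j = 0 := by
  simp [zcfB, Nat.choose_eq_zero_of_lt h]
lemma zcfB_eq_div (n i : ℕ) :
    zcfB n i = zcfD (n : ℝ) i * zcfD ((n : ℝ) + i) i / ((i.factorial : ℝ))^2 := by
  rw [eq_div_iff (pow_ne_zero _ (Nat.cast_ne_zero.mpr (Nat.factorial_ne_zero i)))]
  exact zcfB_fac n i

noncomputable def zcfH (k m j : ℕ) : ℝ := (j:ℝ)^3 * zcfB k j * (zcfB m j - zcfB (m+2) j)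

lemma zcf_keyI (k m j : ℕ) :
    zcfB k j * (((m:ℝ)+2)^3 * zcfB (m+2) j
      - (2*((m:ℝ)+2)-1)*(((m:ℝ)+2)^2-((m:ℝ)+2)+2*(k:ℝ)^2+2*(k:ℝ)+1) * zcfB (m+1) j
      + ((m:ℝ)+1)^3 * zcfB m j)
    = zcfH k m (j+1) - zcfH k m j := by
  by_cases hj : j = m + 2
  · subst hj
    have z1 : zcfB (m+1) (m+2) = 0 := zcfB_zero_of_lt _ _ (by omega)
    have z2 : zcfB m (m+2) = 0 := zcfB_zero_of_lt _ _ (by omega)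
    have z3 : zcfB m (m+2+1) = 0 := zcfB_zero_of_lt _ _ (by omega)
    have z4 : zcfB (m+2) (m+2+1) = 0 := zcfB_zero_of_lt _ _ (by omega)
    simp only [zcfH, z1, z2, z3, z4]
    push_cast
    ring
  · -- main case
    have hfj : ((j.factorial : ℝ)) ≠ 0 := Nat.cast_ne_zero.mpr (Nat.factorial_ne_zero j)
    have hj1 : ((j:ℝ) + 1) ≠ 0 := by positivity
    have hm1 : ((m:ℝ) + 1) ≠ 0 := by positivity
    have hm2 : ((m:ℝ) + 2) ≠ 0 := by positivity
    have hm1j : ((m:ℝ) + 1 + j) ≠ 0 := by positivity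
    have hm2j : ((m:ℝ) + 2 - j) ≠ 0 := by
      intro h
      apply hj
      have : (j:ℝ) = ((m+2 : ℕ) : ℝ) := by push_cast; linarith
      exact_mod_cast this
    simp only [zcfH, zcfB_eq_div, Nat.factorial_succ]
    push_cast
    -- rewrite the (j+1)-level D's
    rw [show zcfD ((m:ℝ)) (j+1) = zcfD (m:ℝ) j * ((m:ℝ) - j) from zcfD_succ _ _,
        show zcfD ((m:ℝ) + ((j:ℝ)+1)) (j+1) = ((m:ℝ)+(j:ℝ)+1) * zcfD ((m:ℝ)+(j:ℝ)) j by
          rw [show ((m:ℝ) + ((j:ℝ)+1)) = ((m:ℝ)+(j:ℝ))+1 by ring, zcfD_succ']; try ring_nf,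
        show zcfD ((m:ℝ)+2) (j+1) = zcfD ((m:ℝ)+2) j * ((m:ℝ)+2 - j) from zcfD_succ _ _,
        show zcfD ((m:ℝ)+2 + ((j:ℝ)+1)) (j+1) = ((m:ℝ)+(j:ℝ)+3) * zcfD ((m:ℝ)+2+(j:ℝ)) j by
          rw [show ((m:ℝ)+2 + ((j:ℝ)+1)) = ((m:ℝ)+2+(j:ℝ))+1 by ring, zcfD_succ']; try ring_nf,
        show zcfD ((k:ℝ)) (j+1) = zcfD (k:ℝ) j * ((k:ℝ) - j) from zcfD_succ _ _,
        show zcfD ((k:ℝ) + ((j:ℝ)+1)) (j+1) = ((k:ℝ)+(j:ℝ)+1) * zcfD ((k:ℝ)+(j:ℝ)) j by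
          rw [show ((k:ℝ) + ((j:ℝ)+1)) = ((k:ℝ)+(j:ℝ))+1 by ring, zcfD_succ']; try ring_nf]
    -- relations
    have r1 : zcfD ((m:ℝ)+2) j * ((m:ℝ)+2 - j) = ((m:ℝ)+2) * zcfD ((m:ℝ)+1) j := by
      have h1 := zcfD_succ ((m:ℝ)+2) j
      have h2 := zcfD_succ' ((m:ℝ)+1) j
      rw [show ((m:ℝ)+1)+1 = (m:ℝ)+2 by ring] at h2
      linarith [h1, h2]
    have r3 : zcfD ((m:ℝ)+1) j * ((m:ℝ)+1 - j) = ((m:ℝ)+1) * zcfD ((m:ℝ)) j := by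
      have h1 := zcfD_succ ((m:ℝ)+1) j
      have h2 := zcfD_succ' ((m:ℝ)) j
      linarith [h1, h2]
    have r2 : zcfD ((m:ℝ)+2+(j:ℝ)) j * ((m:ℝ)+2) = ((m:ℝ)+2+(j:ℝ)) * zcfD ((m:ℝ)+1+(j:ℝ)) j := by
      have h1 := zcfD_succ ((m:ℝ)+2+(j:ℝ)) j
      have h2 := zcfD_succ' ((m:ℝ)+1+(j:ℝ)) j
      rw [show ((m:ℝ)+1+(j:ℝ))+1 = (m:ℝ)+2+(j:ℝ) by ring] at h2
      have : (m:ℝ)+2+(j:ℝ) - (j:ℝ) = (m:ℝ)+2 := by ring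
      rw [this] at h1
      linarith [h1, h2]
    have r4 : zcfD ((m:ℝ)+1+(j:ℝ)) j * ((m:ℝ)+1) = ((m:ℝ)+1+(j:ℝ)) * zcfD ((m:ℝ)+(j:ℝ)) j := by
      have h1 := zcfD_succ ((m:ℝ)+1+(j:ℝ)) j
      have h2 := zcfD_succ' ((m:ℝ)+(j:ℝ)) j
      rw [show ((m:ℝ)+(j:ℝ))+1 = (m:ℝ)+1+(j:ℝ) by ring] at h2
      have : (m:ℝ)+1+(j:ℝ) - (j:ℝ) = (m:ℝ)+1 := by ring
      rw [this] at h1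
      linarith [h1, h2]
    have hA2 : zcfD ((m:ℝ)+2) j = ((m:ℝ)+2) * zcfD ((m:ℝ)+1) j / ((m:ℝ)+2 - j) := by
      rw [eq_div_iff hm2j]; linarith [r1]
    have hA : zcfD ((m:ℝ)) j = zcfD ((m:ℝ)+1) j * ((m:ℝ)+1 - j) / ((m:ℝ)+1) := by
      rw [eq_div_iff hm1]; linarith [r3]
    have hB2 : zcfD ((m:ℝ)+2+(j:ℝ)) j = ((m:ℝ)+2+(j:ℝ)) * zcfD ((m:ℝ)+1+(j:ℝ)) j / ((m:ℝ)+2) := by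
      rw [eq_div_iff hm2]; linarith [r2]
    have hB : zcfD ((m:ℝ)+(j:ℝ)) j = zcfD ((m:ℝ)+1+(j:ℝ)) j * ((m:ℝ)+1) / ((m:ℝ)+1+(j:ℝ)) := by
      rw [eq_div_iff hm1j]; linarith [r4]
    rw [hA2, hA, hB2, hB]
    field_simp
    ring

noncomputable def zcfT (k j : ℕ) : ℝ := ∑ i ∈ Finset.Icc (j+1) k, (1:ℝ)/(i:ℝ)^3
noncomputable def zcfC (k n : ℕ) : ℝ := ∑ j ∈ Finset.range (k+1), zcfB k j * zcfB n j
noncomputable def zcfE (k n : ℕ) : ℝ := ∑ j ∈ Finset.range (k+1), zcfB k j * zcfB n j * zcfT k j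

lemma zcfT_nonneg (k j : ℕ) : 0 ≤ zcfT k j :=
  Finset.sum_nonneg (fun i _ => by positivity)

lemma zcfT_step (k j : ℕ) (h : j + 1 ≤ k) :
    zcfT k j = (1:ℝ)/((j:ℝ)+1)^3 + zcfT k (j+1) := by
  have hsub : Finset.Icc (j+2) k ⊆ Finset.Icc (j+1) k :=
    Finset.Icc_subset_Icc (by omega) le_rfl
  have hsd : Finset.Icc (j+1) k \ Finset.Icc (j+2) k = {j+1} := by
    ext i
    simp only [Finset.mem_sdiff, Finset.mem_Icc, Finset.mem_singleton]
    omega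
  have := Finset.sum_sdiff (f := fun i : ℕ => (1:ℝ)/(i:ℝ)^3) hsub
  rw [hsd] at this
  unfold zcfT
  rw [← this, Finset.sum_singleton]
  push_cast
  ring

lemma zcfT_zero_of_le (k j : ℕ) (h : k ≤ j) : zcfT k j = 0 := by
  unfold zcfT
  rw [Finset.Icc_eq_empty (by omega)]
  simp

lemma zcf_c_rec (k m : ℕ) :
    ((m:ℝ)+2)^3 * zcfC k (m+2)
      = (2*((m:ℝ)+2)-1)*(((m:ℝ)+2)^2-((m:ℝ)+2)+2*(k:ℝ)^2+2*(k:ℝ)+1) * zcfC k (m+1)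
        - ((m:ℝ)+1)^3 * zcfC k m := by
  set A : ℝ := (2*((m:ℝ)+2)-1)*(((m:ℝ)+2)^2-((m:ℝ)+2)+2*(k:ℝ)^2+2*(k:ℝ)+1) with hA
  have h2 : ∑ j ∈ Finset.range (k+1),
      (zcfB k j * (((m:ℝ)+2)^3 * zcfB (m+2) j - A * zcfB (m+1) j + ((m:ℝ)+1)^3 * zcfB m j))
      = 0 := by
    calc ∑ j ∈ Finset.range (k+1),
        (zcfB k j * (((m:ℝ)+2)^3 * zcfB (m+2) j - A * zcfB (m+1) j + ((m:ℝ)+1)^3 * zcfB m j))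
        = ∑ j ∈ Finset.range (k+1), (zcfH k m (j+1) - zcfH k m j) :=
          Finset.sum_congr rfl (fun j _ => zcf_keyI k m j)
      _ = zcfH k m (k+1) - zcfH k m 0 := Finset.sum_range_sub _ _
      _ = 0 := by
          simp [zcfH, zcfB, Nat.choose_succ_self]
  have expand : ∑ j ∈ Finset.range (k+1),
      (zcfB k j * (((m:ℝ)+2)^3 * zcfB (m+2) j - A * zcfB (m+1) j + ((m:ℝ)+1)^3 * zcfB m j))
      = ((m:ℝ)+2)^3 * zcfC k (m+2) - A * zcfC k (m+1) + ((m:ℝ)+1)^3 * zcfC k m := by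
    unfold zcfC
    rw [Finset.mul_sum, Finset.mul_sum, Finset.mul_sum, ← Finset.sum_sub_distrib,
      ← Finset.sum_add_distrib]
    exact Finset.sum_congr rfl (fun j _ => by ring)
  rw [expand] at h2
  linarith [h2]

lemma zcf_tauH (k m j : ℕ) :
    (zcfT k j - zcfT k (j+1)) * zcfH k m (j+1)
      = zcfB k (j+1) * (zcfB m (j+1) - zcfB (m+2) (j+1)) := by
  rcases le_or_gt (j+1) k with h | h
  · rw [zcfT_step k j h]
    have hj1 : ((j:ℝ)+1) ≠ 0 := by positivity
    simp only [zcfH]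
    push_cast
    field_simp
    ring
  · rw [zcfT_zero_of_le k j (by omega), zcfT_zero_of_le k (j+1) (by omega),
      zcfB_zero_of_lt k (j+1) h]
    ring

lemma zcf_e_rec (k m : ℕ) :
    ((m:ℝ)+2)^3 * zcfE k (m+2)
      = (2*((m:ℝ)+2)-1)*(((m:ℝ)+2)^2-((m:ℝ)+2)+2*(k:ℝ)^2+2*(k:ℝ)+1) * zcfE k (m+1)
        - ((m:ℝ)+1)^3 * zcfE k m + zcfC k m - zcfC k (m+2) := by
  set A : ℝ := (2*((m:ℝ)+2)-1)*(((m:ℝ)+2)^2-((m:ℝ)+2)+2*(k:ℝ)^2+2*(k:ℝ)+1) with hA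
  -- sum of tau_j * keyI
  have h2 : ∑ j ∈ Finset.range (k+1),
      (zcfT k j * (zcfB k j * (((m:ℝ)+2)^3 * zcfB (m+2) j - A * zcfB (m+1) j
        + ((m:ℝ)+1)^3 * zcfB m j)))
      = ∑ j ∈ Finset.range (k+1), (zcfT k j * zcfH k m (j+1) - zcfT k j * zcfH k m j) := by
    refine Finset.sum_congr rfl (fun j _ => ?_)
    rw [zcf_keyI k m j]
    ring
  -- Abel: split
  have h3 : ∑ j ∈ Finset.range (k+1), (zcfT k j * zcfH k m (j+1) - zcfT k j * zcfH k m j)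
      = ∑ j ∈ Finset.range (k+1),
          (zcfT k (j+1) * zcfH k m (j+1) - zcfT k j * zcfH k m j)
        + ∑ j ∈ Finset.range (k+1), (zcfT k j - zcfT k (j+1)) * zcfH k m (j+1) := by
    rw [← Finset.sum_add_distrib]
    exact Finset.sum_congr rfl (fun j _ => by ring)
  have h4 : ∑ j ∈ Finset.range (k+1),
      (zcfT k (j+1) * zcfH k m (j+1) - zcfT k j * zcfH k m j) = 0 := by
    rw [Finset.sum_range_sub (fun j => zcfT k j * zcfH k m j)]
    simp [zcfH, zcfB, Nat.choose_succ_self, zcfT_zero_of_le k (k+1) (by omega)]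
  have h5 : ∑ j ∈ Finset.range (k+1), (zcfT k j - zcfT k (j+1)) * zcfH k m (j+1)
      = zcfC k m - zcfC k (m+2) := by
    rw [Finset.sum_congr rfl (fun j _ => zcf_tauH k m j)]
    have hF0 : zcfB k 0 * (zcfB m 0 - zcfB (m+2) 0) = 0 := by
      simp [zcfB_zero]
    have hFtop : zcfB k (k+1) * (zcfB m (k+1) - zcfB (m+2) (k+1)) = 0 := by
      simp [zcfB, Nat.choose_succ_self]
    have hs1 := Finset.sum_range_succ
      (fun j => zcfB k j * (zcfB m j - zcfB (m+2) j)) (k+1)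
    have hs2 := Finset.sum_range_succ'
      (fun j => zcfB k j * (zcfB m j - zcfB (m+2) j)) (k+1)
    have : zcfC k m - zcfC k (m+2)
        = ∑ j ∈ Finset.range (k+1), (zcfB k j * (zcfB m j - zcfB (m+2) j)) := by
      unfold zcfC
      rw [← Finset.sum_sub_distrib]
      exact Finset.sum_congr rfl (fun j _ => by ring)
    rw [this]
    have := hs1.symm.trans hs2
    rw [hFtop, hF0] at this
    simpa using this.symm
  have expand : ∑ j ∈ Finset.range (k+1),
      (zcfT k j * (zcfB k j * (((m:ℝ)+2)^3 * zcfB (m+2) j - A * zcfB (m+1) j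
        + ((m:ℝ)+1)^3 * zcfB m j)))
      = ((m:ℝ)+2)^3 * zcfE k (m+2) - A * zcfE k (m+1) + ((m:ℝ)+1)^3 * zcfE k m := by
    unfold zcfE
    rw [Finset.mul_sum, Finset.mul_sum, Finset.mul_sum, ← Finset.sum_sub_distrib,
      ← Finset.sum_add_distrib]
    exact Finset.sum_congr rfl (fun j _ => by ring)
  rw [expand, h3, h4, h5] at h2
  linarith [h2]

lemma zcfC_zero (k : ℕ) : zcfC k 0 = 1 := by
  unfold zcfC
  rw [Finset.sum_range_succ']
  have : ∀ j ∈ Finset.range k, zcfB k (j+1) * zcfB 0 (j+1) = 0 := by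
    intro j _
    rw [zcfB_zero_of_lt 0 (j+1) (by omega)]
    ring
  rw [Finset.sum_congr rfl this]
  simp [zcfB_zero]

lemma zcfE_zero (k : ℕ) : zcfE k 0 = zcfT k 0 := by
  unfold zcfE
  rw [Finset.sum_range_succ']
  have : ∀ j ∈ Finset.range k, zcfB k (j+1) * zcfB 0 (j+1) * zcfT k (j+1) = 0 := by
    intro j _
    rw [zcfB_zero_of_lt 0 (j+1) (by omega)]
    ring
  rw [Finset.sum_congr rfl this]
  simp [zcfB_zero]

lemma zcfB_k_one (k : ℕ) : zcfB k 1 = (k:ℝ) * ((k:ℝ)+1) := by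
  unfold zcfB
  rw [Nat.choose_one_right, Nat.choose_one_right]
  push_cast
  ring

lemma zcfC_one (k : ℕ) : zcfC k 1 = 2*(k:ℝ)^2 + 2*(k:ℝ) + 1 := by
  rcases k with _ | K
  · unfold zcfC
    simp [zcfB_zero]
  · unfold zcfC
    rw [Finset.sum_range_succ', Finset.sum_range_succ']
    have : ∀ j ∈ Finset.range K, zcfB (K+1) (j+1+1) * zcfB 1 (j+1+1) = 0 := by
      intro j _
      rw [zcfB_zero_of_lt 1 (j+1+1) (by omega)]
      ring
    rw [Finset.sum_congr rfl this]
    have h1 : zcfB 1 1 = 2 := by norm_num [zcfB]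
    rw [Finset.sum_const, zcfB_k_one, h1]
    simp [zcfB_zero]
    push_cast
    ring

lemma zcfE_one (k : ℕ) : zcfE k 1 = zcfT k 0 + 2*(k:ℝ)*((k:ℝ)+1) * zcfT k 1 := by
  rcases k with _ | K
  · unfold zcfE
    simp [zcfB_zero, zcfT_zero_of_le 0 0 le_rfl, zcfT_zero_of_le 0 1 (by omega)]
  · unfold zcfE
    rw [Finset.sum_range_succ', Finset.sum_range_succ']
    have : ∀ j ∈ Finset.range K,
        zcfB (K+1) (j+1+1) * zcfB 1 (j+1+1) * zcfT (K+1) (j+1+1) = 0 := by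
      intro j _
      rw [zcfB_zero_of_lt 1 (j+1+1) (by omega)]
      ring
    rw [Finset.sum_congr rfl this]
    have h1 : zcfB 1 1 = 2 := by norm_num [zcfB]
    rw [Finset.sum_const, zcfB_k_one, h1]
    simp [zcfB_zero]
    push_cast
    ring

lemma zcfC_ge_one (k n : ℕ) : 1 ≤ zcfC k n := by
  have h := Finset.single_le_sum (f := fun j => zcfB k j * zcfB n j)
    (fun j _ => mul_nonneg (zcfB_nonneg _ _) (zcfB_nonneg _ _))
    (Finset.mem_range.mpr (Nat.succ_pos k))
  simpa [zcfB_zero, zcfC] using h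

lemma zcfC_pos (k n : ℕ) : 0 < zcfC k n := lt_of_lt_of_le one_pos (zcfC_ge_one k n)

lemma zcfC_ge_top (k n : ℕ) : zcfB n k ≤ zcfC k n := by
  have h := Finset.single_le_sum (f := fun j => zcfB k j * zcfB n j)
    (fun j _ => mul_nonneg (zcfB_nonneg _ _) (zcfB_nonneg _ _))
    (Finset.mem_range.mpr (Nat.lt_succ_self k))
  have h1 : (1:ℝ) ≤ zcfB k k := by
    unfold zcfB
    rw [Nat.choose_self]
    have := Nat.choose_pos (show k ≤ k + k by omega)
    push_cast
    have : (1:ℝ) ≤ (((k+k).choose k : ℕ) : ℝ) := by exact_mod_cast this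
    linarith
  calc zcfB n k = 1 * zcfB n k := by ring
    _ ≤ zcfB k k * zcfB n k := mul_le_mul_of_nonneg_right h1 (zcfB_nonneg _ _)
    _ ≤ zcfC k n := h

lemma zcfE_nonneg (k n : ℕ) : 0 ≤ zcfE k n :=
  Finset.sum_nonneg fun j _ =>
    mul_nonneg (mul_nonneg (zcfB_nonneg _ _) (zcfB_nonneg _ _)) (zcfT_nonneg _ _)

lemma zcf_choose_mono (N : ℕ) {r s : ℕ} (hrs : r ≤ s) (h : 2*s ≤ N) :
    N.choose r ≤ N.choose s := by
  induction s, hrs using Nat.le_induction with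
  | base => exact le_rfl
  | succ s hs ih =>
    exact le_trans (ih (by omega)) (Nat.choose_le_succ_of_lt_half_left (by omega))

lemma zcf_chooseB_mono (N : ℕ) {r s : ℕ} (hrs : r ≤ s) :
    (N+r).choose r ≤ (N+s).choose s := by
  induction s, hrs using Nat.le_induction with
  | base => exact le_rfl
  | succ s hs ih =>
    refine le_trans ih ?_
    calc (N+s).choose s ≤ (N+s).choose s + (N+s).choose (s+1) := Nat.le_add_right _ _
      _ = (N+(s+1)).choose (s+1) := (Nat.choose_succ_succ _ _).symm

lemma zcfB_mono (N : ℕ) {r s : ℕ} (hrs : r ≤ s) (h : 2*s ≤ N) :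
    zcfB N r ≤ zcfB N s := by
  unfold zcfB
  exact mul_le_mul (Nat.cast_le.mpr (zcf_choose_mono N hrs h))
    (Nat.cast_le.mpr (zcf_chooseB_mono N hrs)) (Nat.cast_nonneg _) (Nat.cast_nonneg _)

lemma zcfE_le (K n : ℕ) (hn : 2*(K+1) ≤ n) :
    zcfE (K+1) n ≤ (∑ j ∈ Finset.range (K+1), zcfB (K+1) j * zcfT (K+1) j) * zcfB n K := by
  unfold zcfE
  rw [Finset.sum_range_succ, zcfT_zero_of_le (K+1) (K+1) le_rfl, mul_zero, add_zero,
    Finset.sum_mul]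
  refine Finset.sum_le_sum fun j hj => ?_
  have hjK : j ≤ K := by
    have := Finset.mem_range.mp hj
    omega
  have hB : zcfB n j ≤ zcfB n K := zcfB_mono n hjK (by omega)
  calc zcfB (K+1) j * zcfB n j * zcfT (K+1) j
      = (zcfB (K+1) j * zcfT (K+1) j) * zcfB n j := by ring
    _ ≤ (zcfB (K+1) j * zcfT (K+1) j) * zcfB n K :=
        mul_le_mul_of_nonneg_left hB (mul_nonneg (zcfB_nonneg _ _) (zcfT_nonneg _ _))

lemma zcf_ratio_bound (K n : ℕ) (hn : 2*(K+1) ≤ n) :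
    zcfB n K * ((n:ℝ) - K) ≤ ((K:ℝ)+1) * zcfB n (K+1) := by
  have hnat : n.choose K * ((n+K).choose K) * (n - K)
      ≤ (K+1) * (n.choose (K+1) * ((n+(K+1)).choose (K+1))) := by
    have h1 : n.choose K * (n - K) = n.choose (K+1) * (K+1) :=
      (Nat.choose_succ_right_eq n K).symm
    have h2 : (n+K).choose K ≤ (n+(K+1)).choose (K+1) := by
      calc (n+K).choose K ≤ (n+K).choose K + (n+K).choose (K+1) := Nat.le_add_right _ _
        _ = (n+(K+1)).choose (K+1) := (Nat.choose_succ_succ _ _).symm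
    calc n.choose K * ((n+K).choose K) * (n - K)
        = (n.choose K * (n - K)) * ((n+K).choose K) := by ring
      _ = (n.choose (K+1) * (K+1)) * ((n+K).choose K) := by rw [h1]
      _ ≤ (n.choose (K+1) * (K+1)) * ((n+(K+1)).choose (K+1)) :=
          Nat.mul_le_mul_left _ h2
      _ = (K+1) * (n.choose (K+1) * ((n+(K+1)).choose (K+1))) := by ring
  have hKn : K ≤ n := by omega
  have := (Nat.cast_le (α := ℝ)).mpr hnat
  push_cast [hKn] at this
  unfold zcfB
  push_cast
  linarith [this]

noncomputable def zcfS (n : ℕ) : ℝ := ∑ j ∈ Finset.Icc 1 n, (1:ℝ)/(j:ℝ)^3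

lemma zcfS_succ (m : ℕ) : zcfS (m+1) = zcfS m + 1/((m:ℝ)+1)^3 := by
  unfold zcfS
  rw [Finset.sum_Icc_succ_top (by omega : 1 ≤ m+1)]
  push_cast
  ring

theorem zeta_three_cf_family (k : ℕ)
    (p q : ℕ → ℝ)
    (hp0 : p 0 = ∑ j ∈ Finset.Icc 1 k, (1 : ℝ) / (j : ℝ) ^ 3)
    (hq0 : q 0 = 1)
    (hp1 : p 1 = (2 * 1 - 1) * (1 ^ 2 - 1 + 2 * (k : ℝ) ^ 2 + 2 * k + 1) *
      (∑ j ∈ Finset.Icc 1 k, (1 : ℝ) / (j : ℝ) ^ 3) + 1)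
    (hq1 : q 1 = (2 * 1 - 1) * (1 ^ 2 - 1 + 2 * (k : ℝ) ^ 2 + 2 * k + 1))
    (hp : ∀ n : ℕ, 2 ≤ n →
      p n = (2 * (n : ℝ) - 1) * ((n : ℝ) ^ 2 - n + 2 * (k : ℝ) ^ 2 + 2 * k + 1) * p (n - 1)
        - ((n : ℝ) - 1) ^ 6 * p (n - 2))
    (hq : ∀ n : ℕ, 2 ≤ n →
      q n = (2 * (n : ℝ) - 1) * ((n : ℝ) ^ 2 - n + 2 * (k : ℝ) ^ 2 + 2 * k + 1) * q (n - 1)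
        - ((n : ℝ) - 1) ^ 6 * q (n - 2)) :
    Filter.Tendsto (fun N => ((p N / q N : ℝ) : ℂ)) Filter.atTop (nhds (riemannZeta 3)) := by
  have hT0 : (∑ j ∈ Finset.Icc 1 k, (1 : ℝ) / (j : ℝ) ^ 3) = zcfT k 0 := rfl
  -- closed form for q
  have hqc : ∀ n, q n = ((n.factorial : ℝ))^3 * zcfC k n := by
    intro n
    induction n using Nat.strong_induction_on with
    | _ n ih =>
      rcases n with _ | n
      · rw [hq0, zcfC_zero]
        norm_num
      rcases n with _ | m
      · rw [hq1, zcfC_one]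
        simp [Nat.factorial_one]
        ring
      · have h1 := ih (m+1) (by omega)
        have h0 := ih m (by omega)
        have hrec := hq (m+1+1) (by omega)
        rw [show m+1+1-1 = m+1 from rfl, show m+1+1-2 = m from rfl, h1, h0] at hrec
        rw [hrec, show m+1+1 = m+2 from rfl]
        have hc := zcf_c_rec k m
        have e2 : (((m+2).factorial : ℕ) : ℝ) = ((m:ℝ)+2) * (((m+1).factorial : ℕ) : ℝ) := by
          rw [Nat.factorial_succ]; push_cast; ring
        have e1 : (((m+1).factorial : ℕ) : ℝ) = ((m:ℝ)+1) * (((m).factorial : ℕ) : ℝ) := by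
          rw [Nat.factorial_succ]; push_cast; ring
        rw [e2, e1]
        push_cast
        linear_combination (-(((m:ℝ)+1) * ((m.factorial : ℕ) : ℝ))^3) * hc
  -- closed form for p
  have hpc : ∀ n, p n = ((n.factorial : ℝ))^3 * (zcfC k n * zcfS n + zcfE k n) := by
    intro n
    induction n using Nat.strong_induction_on with
    | _ n ih =>
      rcases n with _ | n
      · rw [hp0, hT0, zcfC_zero, zcfE_zero]
        have : zcfS 0 = 0 := by simp [zcfS]
        rw [this]
        norm_num
      rcases n with _ | m
      · rw [hp1, hT0, zcfC_one, zcfE_one]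
        have hS1 : zcfS 1 = 1 := by norm_num [zcfS]
        rw [hS1]
        norm_num [Nat.factorial]
        rcases Nat.eq_zero_or_pos k with hk | hk
        · subst hk
          rw [zcfT_zero_of_le 0 0 le_rfl, zcfT_zero_of_le 0 1 (by omega)]
          norm_num
        · have ht := zcfT_step k 0 (by omega)
          norm_num at ht
          rw [ht]
          ring
      · have h1 := ih (m+1) (by omega)
        have h0 := ih m (by omega)
        have hrec := hp (m+1+1) (by omega)
        rw [show m+1+1-1 = m+1 from rfl, show m+1+1-2 = m from rfl, h1, h0] at hrec
        rw [hrec, show m+1+1 = m+2 from rfl]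
        have hc := zcf_c_rec k m
        have he := zcf_e_rec k m
        have hS2' : ((m:ℝ)+2)^3 * zcfS (m+2) = ((m:ℝ)+2)^3 * zcfS (m+1) + 1 := by
          have h := zcfS_succ (m+1)
          rw [show m+1+1 = m+2 from rfl] at h
          push_cast at h
          rw [h]
          have hne : ((m:ℝ)+1+1) ≠ 0 := by positivity
          field_simp
          ring
        have hS1' : ((m:ℝ)+1)^3 * zcfS (m+1) = ((m:ℝ)+1)^3 * zcfS m + 1 := by
          have h := zcfS_succ m
          rw [h]
          have hne : ((m:ℝ)+1) ≠ 0 := by positivity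
          field_simp
        have e2 : (((m+2).factorial : ℕ) : ℝ) = ((m:ℝ)+2) * (((m+1).factorial : ℕ) : ℝ) := by
          rw [Nat.factorial_succ]; push_cast; ring
        have e1 : (((m+1).factorial : ℕ) : ℝ) = ((m:ℝ)+1) * (((m).factorial : ℕ) : ℝ) := by
          rw [Nat.factorial_succ]; push_cast; ring
        rw [e2, e1]
        push_cast
        linear_combination (-(((m:ℝ)+1) * ((m.factorial : ℕ) : ℝ))^3 * zcfS (m+1)) * hc
          - (((m:ℝ)+1) * ((m.factorial : ℕ) : ℝ))^3 * he
          - (((m:ℝ)+1) * ((m.factorial : ℕ) : ℝ))^3 * zcfC k (m+2) * hS2'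
          + (((m:ℝ)+1) * ((m.factorial : ℕ) : ℝ))^3 * zcfC k m * hS1'
  -- ratio identity
  have hratio : ∀ n, p n / q n = zcfS n + zcfE k n / zcfC k n := by
    intro n
    rw [hpc n, hqc n]
    have hC := zcfC_pos k n
    have hF : ((n.factorial : ℕ) : ℝ) ≠ 0 := Nat.cast_ne_zero.mpr n.factorial_ne_zero
    field_simp
  -- error term tends to zero
  have hE : Filter.Tendsto (fun n => zcfE k n / zcfC k n) Filter.atTop (nhds 0) := by
    rcases k with _ | K
    · have hz : ∀ n, zcfE 0 n = 0 := by
        intro n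
        unfold zcfE
        rw [Finset.sum_range_one, zcfT_zero_of_le 0 0 le_rfl, mul_zero]
      simp only [hz, zero_div]
      exact tendsto_const_nhds
    · set M : ℝ := ∑ j ∈ Finset.range (K+1), zcfB (K+1) j * zcfT (K+1) j with hM
      have hM0 : 0 ≤ M :=
        Finset.sum_nonneg fun j _ => mul_nonneg (zcfB_nonneg _ _) (zcfT_nonneg _ _)
      have hub : ∀ n : ℕ, 2*(K+1) ≤ n →
          zcfE (K+1) n / zcfC (K+1) n ≤ M*((K:ℝ)+1)/((n:ℝ) - K) := by
        intro n hn
        have hposB : (0:ℝ) < zcfB n (K+1) := by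
          have c1 : 0 < n.choose (K+1) := Nat.choose_pos (by omega)
          have c2 : 0 < (n+(K+1)).choose (K+1) := Nat.choose_pos (by omega)
          exact mul_pos (by exact_mod_cast c1) (by exact_mod_cast c2)
        have hnK : (0:ℝ) < (n:ℝ) - K := by
          have : (K:ℝ) < (n:ℝ) := by exact_mod_cast (by omega : K < n)
          linarith
        have hb := zcf_ratio_bound K n hn
        calc zcfE (K+1) n / zcfC (K+1) n
            ≤ (M * zcfB n K) / zcfB n (K+1) :=
              div_le_div₀ (mul_nonneg hM0 (zcfB_nonneg _ _)) (zcfE_le K n hn) hposB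
                (zcfC_ge_top (K+1) n)
          _ ≤ M*((K:ℝ)+1)/((n:ℝ) - K) := by
              rw [div_le_div_iff₀ hposB hnK]
              calc M * zcfB n K * ((n:ℝ) - K) = M * (zcfB n K * ((n:ℝ) - K)) := by ring
                _ ≤ M * (((K:ℝ)+1) * zcfB n (K+1)) := mul_le_mul_of_nonneg_left hb hM0
                _ = M*((K:ℝ)+1) * zcfB n (K+1) := by ring
      have hup : Filter.Tendsto (fun n : ℕ => M*((K:ℝ)+1)/((n:ℝ) - K)) Filter.atTop (nhds 0) := by
        apply Filter.Tendsto.div_atTop tendsto_const_nhds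
        have h1 : Filter.Tendsto (fun n : ℕ => (n:ℝ)) Filter.atTop Filter.atTop :=
          tendsto_natCast_atTop_atTop
        have := Filter.tendsto_atTop_add_const_right Filter.atTop (-(K:ℝ)) h1
        simpa [sub_eq_add_neg] using this
      refine tendsto_of_tendsto_of_tendsto_of_le_of_le' tendsto_const_nhds hup ?_ ?_
      · exact Filter.Eventually.of_forall fun n =>
          div_nonneg (zcfE_nonneg _ _) (zcfC_pos _ _).le
      · filter_upwards [Filter.eventually_ge_atTop (2*(K+1))] with n hn
        exact hub n hn
  -- partial sums tend to zeta(3)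
  have hsum3 : Summable (fun n : ℕ => 1 / (n:ℂ)^(3:ℕ)) := by
    have h := (Complex.summable_one_div_nat_cpow (p := 3)).mpr (by norm_num)
    refine h.congr fun n => ?_
    rw [show (3:ℂ) = ((3:ℕ):ℂ) by norm_num, Complex.cpow_natCast]
  have hzeta : riemannZeta 3 = ∑' n : ℕ, 1/(n:ℂ)^(3:ℕ) := by
    have := zeta_nat_eq_tsum_of_gt_one (k := 3) (by norm_num)
    simpa using this
  have hS_tendsto : Filter.Tendsto (fun N : ℕ => ∑ i ∈ Finset.range N, 1/(i:ℂ)^(3:ℕ))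
      Filter.atTop (nhds (riemannZeta 3)) := by
    rw [hzeta]
    exact hsum3.hasSum.tendsto_sum_nat
  have hrange : ∀ N : ℕ, ∑ i ∈ Finset.range (N+1), 1/(i:ℂ)^(3:ℕ) = ((zcfS N : ℝ) : ℂ) := by
    intro N
    have hins : Finset.range (N+1) = insert 0 (Finset.Icc 1 N) := by
      ext i
      simp only [Finset.mem_range, Finset.mem_insert, Finset.mem_Icc]
      omega
    rw [hins, Finset.sum_insert (by simp)]
    have h0 : (1:ℂ)/((0:ℕ):ℂ)^(3:ℕ) = 0 := by norm_num
    rw [h0, zero_add]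
    unfold zcfS
    push_cast
    rfl
  have hS' : Filter.Tendsto (fun N : ℕ => ((zcfS N : ℝ) : ℂ)) Filter.atTop
      (nhds (riemannZeta 3)) := by
    have hcomp := hS_tendsto.comp (Filter.tendsto_add_atTop_nat 1)
    refine hcomp.congr fun N => ?_
    exact hrange N
  have hEc : Filter.Tendsto (fun N : ℕ => ((zcfE k N / zcfC k N : ℝ) : ℂ)) Filter.atTop
      (nhds 0) := by
    have h2 := (Complex.continuous_ofReal.tendsto (0:ℝ)).comp hE
    simp only [Complex.ofReal_zero] at h2
    exact Filter.Tendsto.congr (fun n => rfl) h2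
  have hfin := hS'.add hEc
  rw [add_zero] at hfin
  refine hfin.congr fun N => ?_
  rw [hratio N]
  push_cast
  ring
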